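/- Every traceable graph G admits a rigid orientation; in particular OD'^-(G) = 1. -/

import Mathlib

/-- An orientation of a simple graph `G`: a choice of exactly one direction for each edge. -/
structure GraphOrientation {V : Type*} (G : SimpleGraph V) where
  A : V → V → Prop
  consistent : ∀ u v, G.Adj u v ↔ A u v ∨ A v u
  asymm : ∀ u v, A u v → ¬ A v u

/-- `φ` is an automorphism of the graph `G`. -/
def IsGraphAut {V : Type*} (G : SimpleGraph V) (φ : Equiv.Perm V) : Prop :=
  ∀ u v, G.Adj (φ u) (φ v) ↔ G.Adj u v

/-- `φ` is an automorphism of the digraph with arc relation `A`. -/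
def IsDigraphAut {V : Type*} (A : V → V → Prop) (φ : Equiv.Perm V) : Prop :=
  ∀ u v, A (φ u) (φ v) ↔ A u v

/-- An edge colouring `c` of `G` is distinguishing if the only automorphism
preserving it is the identity. -/
def IsDistEdgeCol {V : Type*} (G : SimpleGraph V) {C : Type*} (c : Sym2 V → C) : Prop :=
  ∀ φ : Equiv.Perm V, IsGraphAut G φ →
    (∀ e ∈ G.edgeSet, c (Sym2.map φ e) = c e) → φ = 1

/-- The distinguishing index `D'(G)` of a graph. -/
noncomputable def D' {V : Type*} (G : SimpleGraph V) : ℕ :=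
  sInf {k | ∃ c : Sym2 V → Fin k, IsDistEdgeCol G c}

/-- An arc colouring `c` of the digraph with arc relation `A` is distinguishing if
the only automorphism preserving it is the identity. -/
def IsDistArcCol {V : Type*} (A : V → V → Prop) {C : Type*} (c : V → V → C) : Prop :=
  ∀ φ : Equiv.Perm V, IsDigraphAut A φ →
    (∀ u v, A u v → c (φ u) (φ v) = c u v) → φ = 1

/-- The distinguishing index of a digraph with arc relation `A`. -/
noncomputable def Dd' {V : Type*} (A : V → V → Prop) : ℕ :=
  sInf {k | ∃ c : V → V → Fin k, IsDistArcCol A c}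

/-- `OD'⁻(G)`: minimum of the distinguishing index over all orientations of `G`. -/
noncomputable def ODminus {V : Type*} (G : SimpleGraph V) : ℕ :=
  sInf {n | ∃ O : GraphOrientation G, Dd' O.A = n}

/-- `OD'⁺(G)`: maximum of the distinguishing index over all orientations of `G`. -/
noncomputable def ODplus {V : Type*} (G : SimpleGraph V) : ℕ :=
  sSup {n | ∃ O : GraphOrientation G, Dd' O.A = n}

/-- `G` is claw-free: no induced `K_{1,3}`. -/
def ClawFree {V : Type*} (G : SimpleGraph V) : Prop :=
  ∀ x a b c : V, G.Adj x a → G.Adj x b → G.Adj x c →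
    a ≠ b → a ≠ c → b ≠ c → (G.Adj a b ∨ G.Adj a c ∨ G.Adj b c)

/-- `G` is traceable: it has a Hamiltonian path. -/
def Traceable {V : Type*} [DecidableEq V] (G : SimpleGraph V) : Prop :=
  ∃ (u v : V) (p : G.Walk u v), p.IsHamiltonian

/-- `H` is empty or has a Hamiltonian path (i.e. admits a path cover by one path). -/
def TraceableOrEmpty {W : Type*} [DecidableEq W] (H : SimpleGraph W) : Prop :=
  IsEmpty W ∨ ∃ (u v : W) (p : H.Walk u v), p.IsHamiltonian

/-- `φ` is a twisted automorphism: some power of `φ` swaps the ends of an edge. -/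
def Twisted {V : Type*} (G : SimpleGraph V) (φ : Equiv.Perm V) : Prop :=
  ∃ (n : ℕ) (u v : V), 1 ≤ n ∧ G.Adj u v ∧ (φ ^ n) u = v ∧ (φ ^ n) v = u

/-- `H` has no cut-vertex. -/
def NoCutVtx {W : Type*} (H : SimpleGraph W) : Prop :=
  ∀ v : W, (H.induce {u | u ≠ v}).Preconnected

theorem stmt7 {V : Type*} [Fintype V] [DecidableEq V] (G : SimpleGraph V)
    (h : Traceable G) :
    (∃ O : GraphOrientation G, ∀ φ : Equiv.Perm V, IsDigraphAut O.A φ → φ = 1) ∧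
      ODminus G = 1 := by
  classical
  obtain ⟨u, v, p, hp⟩ := h
  have hV : Nonempty V := ⟨u⟩
  set l : List V := p.support with hldef
  have hnd : l.Nodup := hp.isPath.support_nodup
  have hmem : ∀ x : V, x ∈ l := fun x => hp.mem_support x
  have hchain : List.Chain' G.Adj l := p.isChain_adj_support
  have hadj : ∀ (i : ℕ) (h : i < l.length - 1),
      G.Adj (l.get ⟨i, by omega⟩) (l.get ⟨i + 1, by omega⟩) :=
    fun i h => List.isChain_iff_getElem.mp hchain i (by omega)
  have hlt : ∀ x : V, l.idxOf x < l.length := fun x =>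
    List.idxOf_lt_length_iff.2 (hmem x)
  have hget : ∀ x : V, l.get ⟨l.idxOf x, hlt x⟩ = x := fun x =>
    List.idxOf_get (hlt x)
  have hidx : ∀ (i : ℕ) (h : i < l.length), l.idxOf (l.get ⟨i, h⟩) = i := by
    intro i h
    rw [List.get_eq_getElem]
    exact hnd.idxOf_getElem i h
  have finj : ∀ x y : V, l.idxOf x = l.idxOf y → x = y := by
    intro x y hxy
    have := hget x
    rw [← hget y]
    rw [← this]
    congr 1
    exact Fin.ext hxy
  -- the orientation along the Hamiltonian path
  let O : GraphOrientation G :=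
    { A := fun a b => G.Adj a b ∧ l.idxOf a < l.idxOf b
      consistent := by
        intro a b
        constructor
        · intro hab
          rcases lt_trichotomy (l.idxOf a) (l.idxOf b) with h' | h' | h'
          · exact Or.inl ⟨hab, h'⟩
          · exact absurd (finj _ _ h') hab.ne
          · exact Or.inr ⟨hab.symm, h'⟩
        · rintro (⟨h', _⟩ | ⟨h', _⟩)
          · exact h'
          · exact h'.symm
      asymm := fun a b h1 h2 => absurd h1.2 (not_lt.2 h2.2.le) }
  have rigid : ∀ φ : Equiv.Perm V, IsDigraphAut O.A φ → φ = 1 := by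
    intro φ hφ
    have key : ∀ n : ℕ, ∀ x : V, l.idxOf x = n → φ x = x := by
      intro n
      induction n using Nat.strong_induction_on with
      | _ n IH =>
        intro x hx
        by_contra hne
        have hfix : ∀ y : V, l.idxOf y < n → φ y = y := fun y hy => IH _ hy y rfl
        set w := φ.symm x with hw
        have hwx : φ w = x := φ.apply_symm_apply x
        have hwne : w ≠ x := fun hc => hne (hc ▸ hwx)
        set j := l.idxOf w with hj
        have hjn : n < j := by
          rcases lt_trichotomy j n with h' | h' | h'
          · exact absurd ((hfix w h').symm.trans hwx) hwne
          · exact absurd (finj w x (by rw [← hj, h', hx])) hwne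
          · exact h'
        have hjl : j < l.length := hlt w
        have hj1 : j - 1 < l.length - 1 := by omega
        set z := l.get ⟨j - 1, by omega⟩ with hz
        have hzidx : l.idxOf z = j - 1 := hidx (j - 1) (by omega)
        have hadjzw : G.Adj z w := by
          have h2 := hadj (j - 1) hj1
          have heq : (⟨j - 1 + 1, by omega⟩ : Fin l.length) = ⟨l.idxOf w, hlt w⟩ :=
            Fin.ext (by simp only []; omega)
          rw [heq, hget] at h2
          exact h2
        have harc : O.A z w := ⟨hadjzw, by rw [hzidx, ← hj]; omega⟩
        have harc2 : O.A (φ z) x := by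
          have := (hφ z w).2 harc
          rwa [hwx] at this
        have hlt2 : l.idxOf (φ z) < n := by
          have := harc2.2
          rwa [hx] at this
        have hfz : φ (φ z) = φ z := hfix _ hlt2
        have hzz : φ z = z := φ.injective hfz
        rw [hzz, hzidx] at hlt2
        omega
    have : ∀ x : V, φ x = x := fun x => key (l.idxOf x) x rfl
    exact Equiv.ext this
  -- Dd' of the rigid orientation is 1
  have h1mem : (1 : ℕ) ∈ {k | ∃ c : V → V → Fin k, IsDistArcCol O.A c} :=
    ⟨fun _ _ => 0, fun φ hφ _ => rigid φ hφ⟩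
  have h0not : ∀ O' : GraphOrientation G,
      (0 : ℕ) ∉ {k | ∃ c : V → V → Fin k, IsDistArcCol O'.A c} := by
    rintro O' ⟨c, -⟩
    exact (c u u).elim0
  -- every orientation of G has a distinguishing arc colouring
  have hOall : ∀ O' : GraphOrientation G, Dd' O'.A ≠ 0 := by
    intro O'
    have hmemS : Fintype.card (V × V) ∈
        {k | ∃ c : V → V → Fin k, IsDistArcCol O'.A c} := by
      refine ⟨fun a b => (Fintype.equivFin (V × V)) (a, b), ?_⟩
      intro φ hφ hc
      have hfixadj : ∀ a b : V, G.Adj a b → φ a = a := by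
        intro a b hab
        rcases (O'.consistent a b).1 hab with h' | h'
        · have hcc := hc a b h'
          have := (Fintype.equivFin (V × V)).injective hcc
          exact congrArg Prod.fst this
        · have hcc := hc b a h'
          have := (Fintype.equivFin (V × V)).injective hcc
          exact congrArg Prod.snd this
      apply Equiv.ext
      intro x
      by_cases hlen : l.idxOf x + 1 < l.length
      · have hadjx : G.Adj x (l.get ⟨l.idxOf x + 1, hlen⟩) := by
          have h2 := hadj (l.idxOf x) (by omega)
          rwa [hget] at h2
        exact hfixadj x _ hadjx
      · by_cases hi0 : l.idxOf x = 0
        · have hlen1 : l.length = 1 := by have := hlt x; omega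
          obtain ⟨a, ha⟩ := List.length_eq_one_iff.1 hlen1
          have h1 : φ x ∈ l := hmem _
          have h2 : x ∈ l := hmem _
          rw [ha, List.mem_singleton] at h1 h2
          show φ x = x
          rw [h1, h2]
        · have hil : l.idxOf x < l.length := hlt x
          have heq : (⟨l.idxOf x - 1 + 1, by omega⟩ : Fin l.length) = ⟨l.idxOf x, hlt x⟩ :=
            Fin.ext (by simp only []; omega)
          have hadjx : G.Adj (l.get ⟨l.idxOf x - 1, by omega⟩) x := by
            have h2 := hadj (l.idxOf x - 1) (by omega)
            rwa [heq, hget] at h2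
          exact hfixadj x _ hadjx.symm
    have hne : {k | ∃ c : V → V → Fin k, IsDistArcCol O'.A c}.Nonempty :=
      ⟨_, hmemS⟩
    have hsmem := Nat.sInf_mem hne
    intro hzero
    rw [Dd'] at hzero
    rw [hzero] at hsmem
    exact h0not O' hsmem
  have hDd1 : Dd' O.A = 1 := by
    have hle : Dd' O.A ≤ 1 := Nat.sInf_le h1mem
    have := hOall O
    omega
  refine ⟨⟨O, rigid⟩, ?_⟩
  have h1T : (1 : ℕ) ∈ {n | ∃ O' : GraphOrientation G, Dd' O'.A = n} := ⟨O, hDd1⟩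
  have hle : ODminus G ≤ 1 := Nat.sInf_le h1T
  have hmemT := Nat.sInf_mem (⟨1, h1T⟩ :
    {n | ∃ O' : GraphOrientation G, Dd' O'.A = n}.Nonempty)
  obtain ⟨O', hO'⟩ := hmemT
  have := hOall O'
  rw [ODminus] at hle ⊢
  omega
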